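/- arXiv:1611.02327 — 13 statements merged into one kernel-verified Lean document; each statement's English description precedes it below -/
import Mathlib

section
/- Let T : X ⇉ X* be a multivalued operator, (x,x*) ∈ T^ρ, (y,y*) ∈ T and t, s > 0. Then (x, t·x*) ∼_p (y, s·y*). -/
open NormedSpace

section PseudoDefs

variable {X : Type*} [NormedAddCommGroup X] [NormedSpace ℝ X]

/-- `(x,x*) ∼_p (y,y*)`: the pseudomonotone relation. -/
def PseudoRel (p q : X × StrongDual ℝ X) : Prop :=
  min (q.2 (p.1 - q.1)) (p.2 (q.1 - p.1)) < 0 ∨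
    (q.2 (p.1 - q.1) = 0 ∧ p.2 (q.1 - p.1) = 0)

/-- An operator (identified with its graph) is pseudomonotone if any two of its
elements are pseudomonotonically related. -/
def Pseudomonotone (T : Set (X × StrongDual ℝ X)) : Prop :=
  ∀ p ∈ T, ∀ q ∈ T, PseudoRel p q

/-- The pseudomonotone polar `T^ρ`. -/
def pPolar (T : Set (X × StrongDual ℝ X)) : Set (X × StrongDual ℝ X) :=
  {p | ∀ q ∈ T, PseudoRel p q}

/-- The monotone polar `T^μ`. -/
def mPolar (T : Set (X × StrongDual ℝ X)) : Set (X × StrongDual ℝ X) :=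
  {p | ∀ q ∈ T, 0 ≤ (p.2 - q.2) (p.1 - q.1)}

/-- A monotone operator. -/
def MonotoneOp (T : Set (X × StrongDual ℝ X)) : Prop :=
  ∀ p ∈ T, ∀ q ∈ T, 0 ≤ (p.2 - q.2) (p.1 - q.1)

/-- The image `T(x)` of an operator at a point. -/
def img (T : Set (X × StrongDual ℝ X)) (x : X) : Set (StrongDual ℝ X) :=
  {x' | (x, x') ∈ T}

/-- The domain of an operator. -/
def opDom (T : Set (X × StrongDual ℝ X)) : Set X :=
  {x | (img T x).Nonempty}

/-- The set of zeros `Z_T` of an operator. -/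
def zeros (T : Set (X × StrongDual ℝ X)) : Set X :=
  {x | (x, (0 : StrongDual ℝ X)) ∈ T}

/-- The strict conic hull `cone_∘(A)` of a subset of the dual. -/
def coneS (A : Set (StrongDual ℝ X)) : Set (StrongDual ℝ X) :=
  {v | ∃ t : ℝ, 0 < t ∧ ∃ a ∈ A, v = t • a}

/-- The conic hull `cone(A)` of a subset of the dual. -/
def coneH (A : Set (StrongDual ℝ X)) : Set (StrongDual ℝ X) :=
  {v | ∃ t : ℝ, 0 ≤ t ∧ ∃ a ∈ A, v = t • a}

/-- The operator `cone_∘(T)`, with `(cone_∘(T))(x) = cone_∘(T(x))`. -/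
def coneOp (T : Set (X × StrongDual ℝ X)) : Set (X × StrongDual ℝ X) :=
  {p | p.2 ∈ coneS (img T p.1)}

/-- The normal cone `N_C(x)`. -/
def normalCone (C : Set X) (x : X) : Set (StrongDual ℝ X) :=
  {x' | ∀ y ∈ C, x' (y - x) ≤ 0}

/-- The strict normal cone `N°_C(x)`. -/
def strictNormalCone (C : Set X) (x : X) : Set (StrongDual ℝ X) :=
  {x' | ∀ y ∈ C, x' (y - x) < 0}

/-- `V_T(x) = {y : ∃ y* ∈ T(y), ⟨x - y, y*⟩ > 0}`. -/
def Vset (T : Set (X × StrongDual ℝ X)) (x : X) : Set X :=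
  {y | ∃ y' ∈ img T y, 0 < y' (x - y)}

/-- `W_T(x) = {y : ∃ y* ∈ T(y), ⟨x - y, y*⟩ = 0}`. -/
def Wset (T : Set (X × StrongDual ℝ X)) (x : X) : Set X :=
  {y | ∃ y' ∈ img T y, y' (x - y) = 0}

/-- Maximal pseudomonotonicity. -/
def MaxPseudomonotone (T : Set (X × StrongDual ℝ X)) : Prop :=
  Pseudomonotone T ∧ ∀ S : Set (X × StrongDual ℝ X), T ⊆ S → Pseudomonotone S → T = S

/-- Pre-maximal pseudomonotonicity: both `T` and `T^ρ` are pseudomonotone. -/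
def PreMaxPseudomonotone (T : Set (X × StrongDual ℝ X)) : Prop :=
  Pseudomonotone T ∧ Pseudomonotone (pPolar T)

/-- The restriction `T|_A` of an operator to a set `A`. -/
def restrictOp (T : Set (X × StrongDual ℝ X)) (A : Set X) : Set (X × StrongDual ℝ X) :=
  {p ∈ T | p.1 ∈ A}

/-- `L(T,x) = {y : ∃ y* ∈ T(y), ⟨x - y, y*⟩ ≥ 0}`. -/
def Lset (T : Set (X × StrongDual ℝ X)) (x : X) : Set X :=
  {y | ∃ y' ∈ img T y, 0 ≤ y' (x - y)}

/-- The operator `T̂ `: `T̂(x) = N_{L(T,x)}(x)` on `Z_T`, `cone_∘(T(x))` on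
`dom(T) \ Z_T`, and `∅` outside `dom(T)`. -/
def hatOp (T : Set (X × StrongDual ℝ X)) : Set (X × StrongDual ℝ X) :=
  {p | (p.1 ∈ zeros T ∧ p.2 ∈ normalCone (Lset T p.1) p.1) ∨
       (p.1 ∈ opDom T ∧ p.1 ∉ zeros T ∧ p.2 ∈ coneS (img T p.1))}

/-- Two operators are equivalent: same domain, same zeros, and the same conic
hulls of images outside the set of zeros. -/
def EquivOp (T S : Set (X × StrongDual ℝ X)) : Prop :=
  opDom T = opDom S ∧ zeros T = zeros S ∧
    ∀ x ∈ opDom T \ zeros T, coneH (img T x) = coneH (img S x)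

/-- `D`-maximal pseudomonotonicity (Hadjisavvas): `T` is pseudomonotone and some
equivalent pseudomonotone operator has no proper pseudomonotone extension with
the same domain. -/
def DMaxPseudomonotone (T : Set (X × StrongDual ℝ X)) : Prop :=
  Pseudomonotone T ∧ ∃ S : Set (X × StrongDual ℝ X), EquivOp T S ∧ Pseudomonotone S ∧
    ∀ S' : Set (X × StrongDual ℝ X), S ⊆ S' → Pseudomonotone S' → opDom S' = opDom S → S' = S

/-- The solution set of the Stampacchia variational inequality problem. -/
def SVIsol (T : Set (X × StrongDual ℝ X)) (K : Set X) : Set X :=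
  {x ∈ K | ∃ x' ∈ img T x, ∀ y ∈ K, 0 ≤ x' (y - x)}

/-- The solution set of the Minty variational inequality problem. -/
def MVIsol (T : Set (X × StrongDual ℝ X)) (K : Set X) : Set X :=
  {x ∈ K | ∀ q ∈ T, q.1 ∈ K → q.2 (x - q.1) ≤ 0}

/-- The linear perturbation `T + α*`. -/
def pertOp (T : Set (X × StrongDual ℝ X)) (α : StrongDual ℝ X) : Set (X × StrongDual ℝ X) :=
  {p | ∃ q ∈ T, p = (q.1, q.2 + α)}

end PseudoDefs

theorem pseudoRel_smul_of_mem_pPolar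
    {X : Type*} [NormedAddCommGroup X] [NormedSpace ℝ X]
    (T : Set (X × StrongDual ℝ X)) (x y : X) (xs ys : StrongDual ℝ X) (t s : ℝ)
    (hx : (x, xs) ∈ pPolar T) (hy : (y, ys) ∈ T) (ht : 0 < t) (hs : 0 < s) :
    PseudoRel (x, t • xs) (y, s • ys) := by
  have h := hx (y, ys) hy
  rcases h with h | ⟨h1, h2⟩
  · left
    simp only [ContinuousLinearMap.smul_apply, smul_eq_mul]
    rcases min_lt_iff.mp h with h | h
    · exact min_lt_iff.mpr (Or.inl (mul_neg_of_pos_of_neg hs h))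
    · exact min_lt_iff.mpr (Or.inr (mul_neg_of_pos_of_neg ht h))
  · right
    simp only [ContinuousLinearMap.smul_apply, smul_eq_mul] at *
    simp [h1, h2]
end

section
/- Let T : X ⇉ X* be a multivalued operator. Then the set of zeros Z_{T^ρ} of its pseudomonotone polar is convex and closed in the weak topology σ(X, X*). -/
open NormedSpace

theorem zeros_pPolar_convex_weaklyClosed
    {X : Type*} [NormedAddCommGroup X] [NormedSpace ℝ X]
    (T : Set (X × StrongDual ℝ X)) :
    Convex ℝ (zeros (pPolar T)) ∧
      IsClosed (toWeakSpace ℝ X '' zeros (pPolar T)) := by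
  have hset : zeros (pPolar T) = ⋂ q ∈ T, {x : X | q.2 x ≤ q.2 q.1} := by
    ext x
    simp only [zeros, pPolar, PseudoRel, Set.mem_setOf_eq, Set.mem_iInter,
      ContinuousLinearMap.zero_apply, map_sub]
    constructor
    · intro h q hq
      rcases h q hq with h' | h'
      · rcases min_lt_iff.mp h' with h'' | h'' <;> linarith
      · linarith [h'.1]
    · intro h q hq
      rcases lt_or_eq_of_le (h q hq) with h' | h'
      · exact Or.inl (min_lt_iff.mpr (Or.inl (by linarith)))
      · exact Or.inr ⟨by linarith, by simp⟩
  rw [hset]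
  constructor
  · exact convex_iInter fun q => convex_iInter fun _ =>
      convex_halfSpace_le ⟨fun a b => q.2.map_add a b, fun c a => q.2.map_smul c a⟩ _
  · have himg : toWeakSpace ℝ X '' (⋂ q ∈ T, {x : X | q.2 x ≤ q.2 q.1}) =
        ⋂ q ∈ T, {z : WeakSpace ℝ X | q.2 ((toWeakSpace ℝ X).symm z) ≤ q.2 q.1} := by
      ext z
      simp only [Set.mem_image, Set.mem_iInter, Set.mem_setOf_eq]
      constructor
      · rintro ⟨x, hx, rfl⟩ q hq
        simpa using hx q hq
      · intro h
        exact ⟨(toWeakSpace ℝ X).symm z, h, by simp⟩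
    rw [himg]
    exact isClosed_iInter fun q => isClosed_iInter fun _ =>
      IsClosed.preimage (WeakBilin.eval_continuous _ q.2) isClosed_Iic
end

section
/- Let T : X ⇉ X* be a multivalued operator. Then (cone_∘(T))^ρ = T^ρ = cone_∘(T^ρ); in particular T^ρ(x) is a cone for all x ∈ X. Moreover T^ρ(x) is a convex set for all x ∈ X. -/
open NormedSpace

section AuxPseudo

lemma pseudo_aux1 (t a b : ℝ) (ht : 0 < t) :
    (min (t*a) b < 0 ∨ (t*a = 0 ∧ b = 0)) ↔ (min a b < 0 ∨ (a = 0 ∧ b = 0)) := by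
  rw [min_lt_iff, min_lt_iff, mul_eq_zero]
  constructor
  · rintro ((h|h)|⟨h1,h2⟩)
    exacts [Or.inl (Or.inl (by nlinarith)), Or.inl (Or.inr h),
      Or.inr ⟨h1.resolve_left ht.ne', h2⟩]
  · rintro ((h|h)|⟨h1,h2⟩)
    exacts [Or.inl (Or.inl (by nlinarith)), Or.inl (Or.inr h), Or.inr ⟨Or.inr h1, h2⟩]

lemma pseudo_aux2 (t a b : ℝ) (ht : 0 < t) :
    (min a (t*b) < 0 ∨ (a = 0 ∧ t*b = 0)) ↔ (min a b < 0 ∨ (a = 0 ∧ b = 0)) := by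
  rw [min_lt_iff, min_lt_iff, mul_eq_zero]
  constructor
  · rintro ((h|h)|⟨h1,h2⟩)
    exacts [Or.inl (Or.inl h), Or.inl (Or.inr (by nlinarith)),
      Or.inr ⟨h1, h2.resolve_left ht.ne'⟩]
  · rintro ((h|h)|⟨h1,h2⟩)
    exacts [Or.inl (Or.inl h), Or.inl (Or.inr (by nlinarith)), Or.inr ⟨h1, Or.inr h2⟩]

end AuxPseudo

theorem pPolar_cone_properties
    {X : Type*} [NormedAddCommGroup X] [NormedSpace ℝ X]
    (T : Set (X × StrongDual ℝ X)) :
    pPolar (coneOp T) = pPolar T ∧ coneOp (pPolar T) = pPolar T ∧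
    (∀ x : X, ∀ t : ℝ, 0 < t → ∀ v ∈ img (pPolar T) x, t • v ∈ img (pPolar T) x) ∧
    (∀ x : X, Convex ℝ (img (pPolar T) x)) := by
  have coneLem : ∀ x : X, ∀ t : ℝ, 0 < t → ∀ v ∈ img (pPolar T) x,
      t • v ∈ img (pPolar T) x := by
    intro x t ht v hv q hq
    have h := hv q hq
    unfold PseudoRel at h ⊢
    simp only [ContinuousLinearMap.smul_apply, smul_eq_mul]
    exact (pseudo_aux2 t _ _ ht).mpr h
  refine ⟨?_, ?_, coneLem, ?_⟩
  · ext p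
    constructor
    · intro hp q hq
      exact hp q ⟨1, one_pos, q.2, hq, (one_smul _ _).symm⟩
    · rintro hp ⟨y, w⟩ ⟨t, ht, a, ha, hw⟩
      have hw' : w = t • a := hw
      subst hw'
      have h := hp (y, a) ha
      unfold PseudoRel at h ⊢
      simp only [ContinuousLinearMap.smul_apply, smul_eq_mul]
      exact (pseudo_aux1 t _ _ ht).mpr h
  · ext p
    constructor
    · rintro ⟨t, ht, a, ha, hpa⟩
      have := coneLem p.1 t ht a ha
      rw [← hpa] at this
      exact this
    · intro hp
      exact ⟨1, one_pos, p.2, hp, (one_smul _ _).symm⟩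
  · intro x v hv w hw a b ha hb hab q hq
    have h1 := hv q hq
    have h2 := hw q hq
    unfold PseudoRel at h1 h2 ⊢
    simp only [ContinuousLinearMap.add_apply, ContinuousLinearMap.smul_apply,
      smul_eq_mul] at *
    set A := q.2 (x - q.1)
    set Bv := v (q.1 - x)
    set Bw := w (q.1 - x)
    rcases lt_trichotomy A 0 with hA | hA | hA
    · exact Or.inl (min_lt_iff.mpr (Or.inl hA))
    · -- A = 0, so Bv ≤ 0 and Bw ≤ 0
      have hBv : Bv ≤ 0 := by
        rcases h1 with h | h
        · rcases min_lt_iff.mp h with h | h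
          · exact absurd h (by simp [hA])
          · exact h.le
        · exact h.2.le
      have hBw : Bw ≤ 0 := by
        rcases h2 with h | h
        · rcases min_lt_iff.mp h with h | h
          · exact absurd h (by simp [hA])
          · exact h.le
        · exact h.2.le
      have hcomb : a * Bv + b * Bw ≤ 0 := by nlinarith
      rcases hcomb.lt_or_eq with h | h
      · exact Or.inl (min_lt_iff.mpr (Or.inr h))
      · exact Or.inr ⟨hA, h⟩
    · -- A > 0, so Bv < 0 and Bw < 0
      have hBv : Bv < 0 := by
        rcases h1 with h | h
        · rcases min_lt_iff.mp h with h | h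
          · exact absurd h (by linarith)
          · exact h
        · exact absurd h.1 (by linarith)
      have hBw : Bw < 0 := by
        rcases h2 with h | h
        · rcases min_lt_iff.mp h with h | h
          · exact absurd h (by linarith)
          · exact h
        · exact absurd h.1 (by linarith)
      refine Or.inl (min_lt_iff.mpr (Or.inr ?_))
      rcases ha.lt_or_eq with h | h
      · nlinarith [mul_pos h (neg_pos.mpr hBv), mul_nonneg hb (neg_pos.mpr hBw).le]
      · have hb1 : b = 1 := by linarith
        rw [← h, hb1]
        simpa using hBw
end

section
/- Let T : X ⇉ X* be a multivalued operator. Then for every x ∈ X, T^ρ(x) = N°_{V_T(x)}(x) ∩ N_{W_T(x)}(x). -/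
open NormedSpace

theorem pPolar_eq_strictNormalCone_inter_normalCone
    {X : Type*} [NormedAddCommGroup X] [NormedSpace ℝ X]
    (T : Set (X × StrongDual ℝ X)) (x : X) :
    img (pPolar T) x = strictNormalCone (Vset T x) x ∩ normalCone (Wset T x) x := by
  ext x'
  constructor
  · intro h
    constructor
    · rintro y ⟨y', hy', hpos⟩
      rcases h (y, y') hy' with hmin | ⟨h1, h2⟩
      · simp only [min_lt_iff] at hmin
        rcases hmin with h1 | h2
        · exact absurd h1 (not_lt.mpr hpos.le)
        · exact h2
      · exact absurd h1 (ne_of_gt hpos)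
    · rintro y ⟨y', hy', hzero⟩
      rcases h (y, y') hy' with hmin | ⟨_, h2⟩
      · simp only [min_lt_iff] at hmin
        rcases hmin with h1 | h2
        · exact absurd (hzero ▸ h1) (lt_irrefl 0)
        · exact h2.le
      · exact h2.le
  · rintro ⟨hV, hW⟩ ⟨y, y'⟩ hq
    rcases lt_trichotomy (y' (x - y)) 0 with h | h | h
    · exact Or.inl (min_lt_iff.mpr (Or.inl h))
    · rcases lt_or_eq_of_le (hW y ⟨y', hq, h⟩) with h' | h'
      · exact Or.inl (min_lt_iff.mpr (Or.inr h'))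
      · exact Or.inr ⟨h, h'⟩
    · exact Or.inl (min_lt_iff.mpr (Or.inr (hV y ⟨y', hq, h⟩)))
end

section
/- Let T : X ⇉ X* be a multivalued operator and x ∈ X. The following are equivalent: (1) V_T(x) = ∅; (2) x ∈ Z_{T^ρ}; (3) T^ρ(x) = N_{W_T(x)}(x); (4) x ∈ dom(T^ρ) and T^ρ(x) is closed in the weak* topology σ(X*, X). -/
open NormedSpace

section AuxProofs
variable {X : Type*} [NormedAddCommGroup X] [NormedSpace ℝ X]

lemma vempty_iff (T : Set (X × StrongDual ℝ X)) (x : X) :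
    Vset T x = ∅ ↔ ∀ q ∈ T, q.2 (x - q.1) ≤ 0 := by
  rw [Set.eq_empty_iff_forall_notMem]
  constructor
  · intro h q hq
    by_contra hlt
    push_neg at hlt
    exact h q.1 ⟨q.2, hq, hlt⟩
  · rintro h y ⟨y', hy', hpos⟩
    exact absurd (h (y, y') hy') (by simpa using hpos)

lemma cone_pPolar (T : Set (X × StrongDual ℝ X)) (x : X) (x' : StrongDual ℝ X)
    (h : (x, x') ∈ pPolar T) {t : ℝ} (ht : 0 < t) : (x, t • x') ∈ pPolar T := by
  intro q hq
  rcases h q hq with hmin | ⟨h1, h2⟩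
  · rcases min_lt_iff.mp hmin with h1 | h2
    · exact Or.inl (min_lt_iff.mpr (Or.inl h1))
    · refine Or.inl (min_lt_iff.mpr (Or.inr ?_))
      simpa using mul_neg_of_pos_of_neg ht h2
  · exact Or.inr ⟨h1, by simp [h2]⟩

lemma one_to_two (T : Set (X × StrongDual ℝ X)) (x : X) (h : Vset T x = ∅) :
    x ∈ zeros (pPolar T) := by
  rw [vempty_iff] at h
  intro q hq
  rcases lt_or_eq_of_le (h q hq) with hlt | heq
  · exact Or.inl (min_lt_iff.mpr (Or.inl hlt))
  · exact Or.inr ⟨heq, by simp⟩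

lemma two_to_one (T : Set (X × StrongDual ℝ X)) (x : X) (h : x ∈ zeros (pPolar T)) :
    Vset T x = ∅ := by
  rw [vempty_iff]
  intro q hq
  rcases h q hq with hmin | ⟨h1, _⟩
  · rcases min_lt_iff.mp hmin with h1 | h2
    · exact h1.le
    · simp at h2
  · exact h1.le

lemma one_to_three (T : Set (X × StrongDual ℝ X)) (x : X) (h : Vset T x = ∅) :
    img (pPolar T) x = normalCone (Wset T x) x := by
  rw [vempty_iff] at h
  ext x'
  constructor
  · rintro hx' y ⟨y', hy', hzero⟩
    rcases hx' (y, y') hy' with hmin | ⟨_, h2⟩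
    · rcases min_lt_iff.mp hmin with h1 | h2
      · exact absurd hzero (by simpa using h1.ne)
      · exact h2.le
    · exact le_of_eq h2
  · intro hx' q hq
    rcases lt_or_eq_of_le (h q hq) with hlt | heq
    · exact Or.inl (min_lt_iff.mpr (Or.inl hlt))
    · have hyW : q.1 ∈ Wset T x := ⟨q.2, hq, heq⟩
      rcases lt_or_eq_of_le (hx' q.1 hyW) with hlt2 | heq2
      · exact Or.inl (min_lt_iff.mpr (Or.inr hlt2))
      · exact Or.inr ⟨heq, heq2⟩

lemma three_to_two (T : Set (X × StrongDual ℝ X)) (x : X)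
    (h : img (pPolar T) x = normalCone (Wset T x) x) : x ∈ zeros (pPolar T) := by
  have : (0 : StrongDual ℝ X) ∈ normalCone (Wset T x) x := fun y _ => by simp
  rw [← h] at this
  exact this

lemma two_to_four (T : Set (X × StrongDual ℝ X)) (x : X) (h : x ∈ zeros (pPolar T)) :
    x ∈ opDom (pPolar T) ∧ IsClosed (StrongDual.toWeakDual '' img (pPolar T) x) := by
  refine ⟨⟨0, h⟩, ?_⟩
  have h3 := one_to_three T x (two_to_one T x h)
  rw [h3]
  have himg : StrongDual.toWeakDual '' normalCone (Wset T x) x =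
      ⋂ y ∈ Wset T x, {w : WeakDual ℝ X | w (y - x) ≤ 0} := by
    ext w
    simp only [Set.mem_image, Set.mem_iInter, Set.mem_setOf_eq]
    constructor
    · rintro ⟨x', hx', rfl⟩ y hy
      exact hx' y hy
    · intro hw
      exact ⟨StrongDual.toWeakDual.symm w, fun y hy => hw y hy, rfl⟩
  rw [himg]
  exact isClosed_biInter fun y _ =>
    isClosed_le (WeakDual.eval_continuous (y - x)) continuous_const

lemma four_to_two (T : Set (X × StrongDual ℝ X)) (x : X)
    (h : x ∈ opDom (pPolar T) ∧ IsClosed (StrongDual.toWeakDual '' img (pPolar T) x)) :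
    x ∈ zeros (pPolar T) := by
  obtain ⟨⟨x', hx'⟩, hcl⟩ := h
  have htend : Filter.Tendsto (fun t : ℝ => StrongDual.toWeakDual (t • x'))
      (nhdsWithin 0 (Set.Ioi 0)) (nhds (StrongDual.toWeakDual (0 : StrongDual ℝ X))) := by
    have : Filter.Tendsto (fun t : ℝ => t • StrongDual.toWeakDual x')
        (nhds 0) (nhds ((0 : ℝ) • StrongDual.toWeakDual x')) :=
      (continuous_id.smul continuous_const).tendsto 0
    simpa using this.mono_left nhdsWithin_le_nhds
  have hmem : ∀ᶠ t in nhdsWithin (0:ℝ) (Set.Ioi 0),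
      StrongDual.toWeakDual (t • x') ∈ StrongDual.toWeakDual '' img (pPolar T) x := by
    filter_upwards [self_mem_nhdsWithin] with t ht
    exact ⟨t • x', cone_pPolar T x x' hx' ht, rfl⟩
  have h0 := hcl.mem_of_tendsto htend hmem
  obtain ⟨x'', hx'', heq⟩ := h0
  have : x'' = 0 := StrongDual.toWeakDual.injective heq
  rwa [this] at hx''

end AuxProofs

theorem pPolar_zeros_tfae
    {X : Type*} [NormedAddCommGroup X] [NormedSpace ℝ X]
    (T : Set (X × StrongDual ℝ X)) (x : X) :
    [Vset T x = ∅,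
     x ∈ zeros (pPolar T),
     img (pPolar T) x = normalCone (Wset T x) x,
     x ∈ opDom (pPolar T) ∧ IsClosed (StrongDual.toWeakDual '' img (pPolar T) x)].TFAE := by
  tfae_have 1 → 2 := one_to_two T x
  tfae_have 2 → 1 := two_to_one T x
  tfae_have 1 → 3 := one_to_three T x
  tfae_have 3 → 2 := three_to_two T x
  tfae_have 2 → 4 := two_to_four T x
  tfae_have 4 → 2 := four_to_two T x
  tfae_finish
end

section
/- Let T : X ⇉ X* be a multivalued operator. The following are equivalent: (1) T is pseudomonotone; (2) T ⊂ T^ρ; (3) T^ρρ ⊂ T^ρ; (4) T^ρρ is pseudomonotone; (5) cone_∘(T) is pseudomonotone. -/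
open NormedSpace

section Aux

variable {X : Type*} [NormedAddCommGroup X] [NormedSpace ℝ X]

lemma pseudoRel_symm {p q : X × StrongDual ℝ X} (h : PseudoRel p q) : PseudoRel q p := by
  unfold PseudoRel at *
  rcases h with h | ⟨h1, h2⟩
  · left; rwa [min_comm]
  · right; exact ⟨h2, h1⟩

lemma pseudo_iff_subset {T : Set (X × StrongDual ℝ X)} :
    Pseudomonotone T ↔ T ⊆ pPolar T := by
  constructor
  · intro h p hp q hq; exact h p hp q hq
  · intro h p hp q hq; exact h hp q hq

lemma pPolar_anti {T S : Set (X × StrongDual ℝ X)} (h : T ⊆ S) : pPolar S ⊆ pPolar T :=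
  fun _ hp q hq => hp q (h hq)

lemma subset_biPolar {T : Set (X × StrongDual ℝ X)} : T ⊆ pPolar (pPolar T) :=
  fun _ hp q hq => pseudoRel_symm (hq _ hp)

lemma pseudoRel_smul {x y : X} {x' y' : StrongDual ℝ X} {t s : ℝ} (ht : 0 < t) (hs : 0 < s)
    (h : PseudoRel (x, x') (y, y')) : PseudoRel (x, t • x') (y, s • y') := by
  unfold PseudoRel at *
  simp only [ContinuousLinearMap.smul_apply, smul_eq_mul] at *
  rcases h with h | ⟨h1, h2⟩
  · left
    rcases min_lt_iff.1 h with h | h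
    · exact min_lt_iff.2 (Or.inl (mul_neg_of_pos_of_neg hs h))
    · exact min_lt_iff.2 (Or.inr (mul_neg_of_pos_of_neg ht h))
  · right; rw [h1, h2]; simp

end Aux

theorem pseudomonotone_tfae
    {X : Type*} [NormedAddCommGroup X] [NormedSpace ℝ X]
    (T : Set (X × StrongDual ℝ X)) :
    [Pseudomonotone T,
     T ⊆ pPolar T,
     pPolar (pPolar T) ⊆ pPolar T,
     Pseudomonotone (pPolar (pPolar T)),
     Pseudomonotone (coneOp T)].TFAE := by
  tfae_have 1 → 2 := pseudo_iff_subset.1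
  tfae_have 2 → 3 := fun h => pPolar_anti h
  tfae_have 3 → 4 := by
    intro h
    exact pseudo_iff_subset.2 (h.trans (subset_biPolar (T := pPolar T)))
  tfae_have 4 → 1 := by
    intro h p hp q hq
    exact h p (subset_biPolar hp) q (subset_biPolar hq)
  tfae_have 1 → 5 := by
    rintro h ⟨x, px⟩ ⟨t, ht, a, ha, rfl⟩ ⟨y, qy⟩ ⟨s, hs, b, hb, rfl⟩
    exact pseudoRel_smul ht hs (h (x, a) ha (y, b) hb)
  tfae_have 5 → 1 := by
    intro h p hp q hq
    have hp' : p ∈ coneOp T := ⟨1, one_pos, p.2, hp, (one_smul ℝ p.2).symm⟩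
    have hq' : q ∈ coneOp T := ⟨1, one_pos, q.2, hq, (one_smul ℝ q.2).symm⟩
    have := h p hp' q hq'
    simpa using this
  tfae_finish
end

section
/- Let T : X ⇉ X* be a pseudomonotone operator. Then the closed convex hull of Z_T with respect to the weak topology σ(X, X*) is contained in Z_{T^ρ}. -/
open NormedSpace

theorem weakClosure_convexHull_zeros_subset
    {X : Type*} [NormedAddCommGroup X] [NormedSpace ℝ X]
    (T : Set (X × StrongDual ℝ X)) (hT : Pseudomonotone T) :
    closure (toWeakSpace ℝ X '' convexHull ℝ (zeros T)) ⊆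
      toWeakSpace ℝ X '' zeros (pPolar T) := by
  set S : Set X := {x | ∀ q ∈ T, q.2 (x - q.1) ≤ 0} with hSdef
  have hzS : zeros T ⊆ S := by
    intro x hx q hq
    rcases hT (x, 0) hx q hq with h | h
    · have h' : min (q.2 (x - q.1)) ((0 : StrongDual ℝ X) (q.1 - x)) < 0 := h
      simp only [ContinuousLinearMap.zero_apply, min_lt_iff] at h'
      rcases h' with h' | h'
      · exact h'.le
      · linarith
    · exact le_of_eq h.1
  have hconv : Convex ℝ S := by
    intro x hx y hy a b ha hb hab
    intro q hq
    have h1 := hx q hq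
    have h2 := hy q hq
    have hx' : q.2 (x - q.1) = q.2 x - q.2 q.1 := map_sub _ _ _
    have hy' : q.2 (y - q.1) = q.2 y - q.2 q.1 := map_sub _ _ _
    have : q.2 (a • x + b • y - q.1) = a * q.2 x + b * q.2 y - q.2 q.1 := by
      rw [map_sub, map_add, map_smul, map_smul]; simp [smul_eq_mul]
    rw [this]
    rw [hx'] at h1
    rw [hy'] at h2
    have hb' : b = 1 - a := by linarith
    subst hb'
    nlinarith [mul_nonpos_of_nonneg_of_nonpos ha h1,
      mul_nonpos_of_nonneg_of_nonpos hb h2]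
  have hhull : convexHull ℝ (zeros T) ⊆ S := convexHull_min hzS hconv
  set C : Set (WeakSpace ℝ X) := {z | ∀ q ∈ T, q.2 ((toWeakSpace ℝ X).symm z - q.1) ≤ 0}
    with hCdef
  have hCclosed : IsClosed C := by
    have : C = ⋂ q ∈ T, {z : WeakSpace ℝ X | q.2 ((toWeakSpace ℝ X).symm z - q.1) ≤ 0} := by
      ext z; simp [hCdef]
    rw [this]
    refine isClosed_biInter fun q hq => ?_
    have hcont : Continuous fun z : WeakSpace ℝ X => q.2 ((toWeakSpace ℝ X).symm z - q.1) := by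
      have h1 : Continuous fun z : WeakSpace ℝ X => q.2 ((toWeakSpace ℝ X).symm z) :=
        WeakBilin.eval_continuous ((topDualPairing ℝ X).flip) q.2
      simp only [map_sub]; exact h1.sub continuous_const
    exact isClosed_le hcont continuous_const
  have hsub : toWeakSpace ℝ X '' convexHull ℝ (zeros T) ⊆ C := by
    rintro _ ⟨x, hx, rfl⟩ q hq
    have : (toWeakSpace ℝ X).symm (toWeakSpace ℝ X x) = x := (toWeakSpace ℝ X).symm_apply_apply x
    rw [this]
    exact hhull hx q hq
  have hclos : closure (toWeakSpace ℝ X '' convexHull ℝ (zeros T)) ⊆ C :=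
    closure_minimal hsub hCclosed
  intro z hz
  have hzC := hclos hz
  refine ⟨(toWeakSpace ℝ X).symm z, ?_, (toWeakSpace ℝ X).apply_symm_apply z⟩
  intro q hq
  have h := hzC q hq
  rcases lt_or_eq_of_le h with h | h
  · exact Or.inl (min_lt_iff.mpr (Or.inl h))
  · exact Or.inr ⟨h, by simp⟩
end

section
/- Let T : X ⇉ X* be a multivalued operator. If the convex hull of dom(T) is contained in dom(T^ρ), then T is pseudomonotone. In particular, if dom(T^ρ) = X then T is pseudomonotone. -/
open NormedSpace

theorem pseudomonotone_of_convexHull_dom_subset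
    {X : Type*} [NormedAddCommGroup X] [NormedSpace ℝ X]
    (T : Set (X × StrongDual ℝ X)) :
    (convexHull ℝ (opDom T) ⊆ opDom (pPolar T) → Pseudomonotone T) ∧
    (opDom (pPolar T) = Set.univ → Pseudomonotone T) := by
  have main : convexHull ℝ (opDom T) ⊆ opDom (pPolar T) → Pseudomonotone T := by
    intro hsub p hp q hq
    by_contra hnot
    unfold PseudoRel at hnot
    push_neg at hnot
    obtain ⟨hmin, hne⟩ := hnot
    rw [le_min_iff] at hmin
    obtain ⟨ha, hb⟩ := hmin
    have hx : p.1 ∈ opDom T := ⟨p.2, by simpa [img] using hp⟩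
    have hy : q.1 ∈ opDom T := ⟨q.2, by simpa [img] using hq⟩
    set z : X := (2:ℝ)⁻¹ • p.1 + (2:ℝ)⁻¹ • q.1 with hzdef
    have hz : z ∈ convexHull ℝ (opDom T) :=
      (convex_convexHull ℝ (opDom T)) (subset_convexHull ℝ _ hx)
        (subset_convexHull ℝ _ hy) (by norm_num) (by norm_num) (by norm_num)
    obtain ⟨z', hz'⟩ := hsub hz
    have h1 := hz' q hq
    have h2 := hz' p hp
    unfold PseudoRel at h1 h2
    have e1 : z - q.1 = (2:ℝ)⁻¹ • (p.1 - q.1) := by rw [hzdef]; module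
    have e2 : q.1 - z = -((2:ℝ)⁻¹ • (p.1 - q.1)) := by rw [hzdef]; module
    have e3 : z - p.1 = -((2:ℝ)⁻¹ • (p.1 - q.1)) := by rw [hzdef]; module
    have e4 : p.1 - z = (2:ℝ)⁻¹ • (p.1 - q.1) := by rw [hzdef]; module
    simp only [e1, e2] at h1
    simp only [e3, e4] at h2
    simp only [map_neg, map_smul, smul_eq_mul, min_lt_iff] at h1 h2
    set a := q.2 (p.1 - q.1) with hadef
    set b := p.2 (q.1 - p.1) with hbdef
    set c := z' (p.1 - q.1) with hcdef
    have hbb : p.2 (p.1 - q.1) = -b := by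
      have h : p.1 - q.1 = -(q.1 - p.1) := by module
      rw [h, map_neg, hbdef]
    rw [hbb] at h2
    have hnz : a ≠ 0 ∨ b ≠ 0 := by
      by_contra h
      push_neg at h
      exact hne h.1 h.2
    rcases h1 with (h1 | h1) | ⟨h1a, h1b⟩ <;>
      rcases h2 with (h2 | h2) | ⟨h2a, h2b⟩ <;>
        first
          | linarith
          | exact absurd (by linarith : b = 0) (hne (by linarith))
  exact ⟨main, fun h => main (by rw [h]; exact Set.subset_univ _)⟩
end

section
/- Let T : X ⇉ X* be a monotone operator. Then T is maximal pseudomonotone if, and only if, T = X × {0}. -/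
open NormedSpace

section Aux

variable {X : Type*} [NormedAddCommGroup X] [NormedSpace ℝ X]

lemma pseudoRel_self (p : X × StrongDual ℝ X) : PseudoRel p p :=
  Or.inr ⟨by simp, by simp⟩

end Aux

theorem monotone_maxPseudomonotone_iff
    {X : Type*} [NormedAddCommGroup X] [NormedSpace ℝ X]
    (T : Set (X × StrongDual ℝ X)) (hT : MonotoneOp T) :
    MaxPseudomonotone T ↔ T = Set.univ ×ˢ ({0} : Set (StrongDual ℝ X)) := by
  constructor
  · rintro ⟨hP, hmax⟩
    -- Step 1: T is closed under positive scaling of the dual component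
    have hB : ∀ p ∈ T, ∀ t : ℝ, 0 < t → ((p.1, t • p.2) : X × StrongDual ℝ X) ∈ T := by
      rintro ⟨x, x'⟩ hp t ht
      have key : ∀ q ∈ T, PseudoRel ((x, t • x') : X × StrongDual ℝ X) q := by
        rintro ⟨y, y'⟩ hq
        have h := hP _ hp _ hq
        unfold PseudoRel at h ⊢
        simp only [ContinuousLinearMap.smul_apply, smul_eq_mul] at *
        rcases h with h | ⟨h1, h2⟩
        · left
          rcases min_lt_iff.1 h with h | h
          · exact min_lt_iff.2 (Or.inl h)
          · exact min_lt_iff.2 (Or.inr (mul_neg_of_pos_of_neg ht h))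
        · exact Or.inr ⟨h1, by rw [h2]; ring⟩
      have hS : Pseudomonotone (insert ((x, t • x') : X × StrongDual ℝ X) T) := by
        rintro p hp' q hq'
        rcases hp' with rfl | hp' <;> rcases hq' with rfl | hq'
        · exact pseudoRel_self _
        · exact key _ hq'
        · exact pseudoRel_symm (key _ hp')
        · exact hP _ hp' _ hq'
      have := hmax _ (Set.subset_insert _ _) hS
      rw [this]; exact Set.mem_insert _ _
    -- Step 2: for all p q in T, q.2 (p.1 - q.1) ≤ 0
    have hC : ∀ p ∈ T, ∀ q ∈ T, q.2 (p.1 - q.1) ≤ 0 := by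
      rintro ⟨x, x'⟩ hp ⟨y, y'⟩ hq
      simp only
      by_contra h
      push_neg at h
      have key : ∀ t : ℝ, 0 < t → y' (x - y) ≤ t * x' (x - y) := by
        intro t ht
        have h2 := hT _ (hB _ hp t ht) _ hq
        simp only [ContinuousLinearMap.sub_apply, ContinuousLinearMap.smul_apply,
          smul_eq_mul] at h2
        linarith
      obtain ⟨c, hcg⟩ : ∃ c, x' (x - y) = c := ⟨_, rfl⟩
      obtain ⟨d, hdg⟩ : ∃ d, y' (x - y) = d := ⟨_, rfl⟩
      rw [hcg] at key
      rw [hdg] at key h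
      rcases le_or_gt c 0 with hc | hc
      · have := key 1 one_pos; linarith
      · have hc' : c ≠ 0 := ne_of_gt hc
        have h1 := key (d / (2 * c)) (by positivity)
        have h2 : d / (2 * c) * c = d / 2 := by
          field_simp
        rw [h2] at h1; linarith
    -- Step 3: every dual component is 0
    have hD : ∀ p ∈ T, p.2 = 0 := by
      rintro ⟨y, y'⟩ hq
      simp only
      by_contra hne
      obtain ⟨u, hu⟩ : ∃ u, 0 < y' u := by
        by_contra h'
        push_neg at h'
        apply hne
        ext v
        have h1 := h' v
        have h2 := h' (-v)
        simp only [map_neg] at h2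
        simp only [ContinuousLinearMap.zero_apply]
        linarith
      set p : X × StrongDual ℝ X := (y + u, (1/2 : ℝ) • y') with hpdef
      have hb : ∀ q ∈ T, p.2 (q.1 - p.1) < 0 := by
        intro q hqT
        have h1 : y' (q.1 - y) ≤ 0 := hC q hqT (y, y') hq
        have h3 : q.1 - (y + u) = (q.1 - y) - u := by abel
        simp only [map_sub] at h1
        simp only [hpdef, ContinuousLinearMap.smul_apply, smul_eq_mul, h3, map_sub]
        nlinarith
      have hS : Pseudomonotone (insert p T) := by
        rintro r hr s hs
        rcases hr with rfl | hr <;> rcases hs with rfl | hs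
        · exact pseudoRel_self _
        · exact Or.inl (min_lt_iff.2 (Or.inr (hb s hs)))
        · exact pseudoRel_symm (Or.inl (min_lt_iff.2 (Or.inr (hb r hr))))
        · exact hP _ hr _ hs
      have hpT : p ∈ T := by
        rw [hmax _ (Set.subset_insert _ _) hS]; exact Set.mem_insert _ _
      have hmono := hT p hpT (y, y') hq
      simp only [hpdef, ContinuousLinearMap.sub_apply, ContinuousLinearMap.smul_apply,
        smul_eq_mul, add_sub_cancel_left] at hmono
      linarith
    -- conclude
    have hsub : T ⊆ Set.univ ×ˢ ({0} : Set (StrongDual ℝ X)) := by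
      intro p hp
      exact Set.mem_prod.2 ⟨trivial, hD p hp⟩
    have hps : Pseudomonotone (Set.univ ×ˢ ({0} : Set (StrongDual ℝ X))) := by
      rintro ⟨x, x'⟩ hx ⟨y, y'⟩ hy
      simp only [Set.mem_prod, Set.mem_singleton_iff] at hx hy
      rw [hx.2, hy.2]
      exact Or.inr ⟨by simp, by simp⟩
    exact hmax _ hsub hps
  · rintro rfl
    constructor
    · rintro ⟨x, x'⟩ hx ⟨y, y'⟩ hy
      simp only [Set.mem_prod, Set.mem_singleton_iff] at hx hy
      rw [hx.2, hy.2]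
      exact Or.inr ⟨by simp, by simp⟩
    · intro S hsub hS
      apply Set.Subset.antisymm hsub
      rintro ⟨x, x'⟩ hx
      have hle : ∀ w, x' w ≤ 0 := by
        intro w
        have hmem : ((x + w, (0 : StrongDual ℝ X)) : X × StrongDual ℝ X) ∈ S :=
          hsub (Set.mem_prod.2 ⟨trivial, rfl⟩)
        have h := hS _ hx _ hmem
        unfold PseudoRel at h
        simp only [ContinuousLinearMap.zero_apply, add_sub_cancel_left] at h
        rcases h with h | ⟨_, h2⟩
        · rcases min_lt_iff.1 h with h | h
          · exact absurd h (by norm_num)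
          · exact h.le
        · exact h2.le
      have hx0 : x' = 0 := by
        ext v
        have h1 := hle v
        have h2 := hle (-v)
        simp only [map_neg] at h2
        simp only [ContinuousLinearMap.zero_apply]
        linarith
      exact Set.mem_prod.2 ⟨trivial, hx0⟩
end

section
/- Let T, S : X ⇉ X* be two pseudomonotone operators such that T ⊂ S. If T is pre-maximal pseudomonotone, then S is pre-maximal pseudomonotone and T^ρ = S^ρ. -/
open NormedSpace

theorem preMax_of_subset
    {X : Type*} [NormedAddCommGroup X] [NormedSpace ℝ X]
    (T S : Set (X × StrongDual ℝ X)) (hT : Pseudomonotone T) (hS : Pseudomonotone S)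
    (hTS : T ⊆ S) (hpre : PreMaxPseudomonotone T) :
    PreMaxPseudomonotone S ∧ pPolar T = pPolar S := by
  have hSsub : S ⊆ pPolar T := fun p hp q hq => hS p hp q (hTS hq)
  have hpol : pPolar T = pPolar S := by
    apply Set.Subset.antisymm
    · intro p hp q hq
      exact hpre.2 p hp q (hSsub hq)
    · intro p hp q hq
      exact hp q (hTS hq)
  exact ⟨⟨hS, hpol ▸ hpre.2⟩, hpol⟩
end

section
/- Let T : X ⇉ X* be a pseudomonotone operator. If dom(T) is convex, then (T̂)^ρ_D = T^ρ_D, i.e. the restrictions to dom(T) of the pseudomonotone polars of T̂ and of T coincide. -/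
open NormedSpace

lemma subset_hatOp {X : Type*} [NormedAddCommGroup X] [NormedSpace ℝ X]
    (T : Set (X × StrongDual ℝ X)) (hT : Pseudomonotone T) : T ⊆ hatOp T := by
  rintro ⟨y, y'⟩ hq
  by_cases hz : (y, (0 : StrongDual ℝ X)) ∈ T
  · left
    refine ⟨hz, ?_⟩
    rintro z ⟨z', hz', hzz⟩
    have h := hT (z, z') hz' (y, y') hq
    rcases h with h | ⟨h1, h2⟩
    · rcases min_lt_iff.1 h with h | h
      · exact le_of_lt h
      · exact absurd h (not_lt.2 hzz)
    · exact le_of_eq h1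
  · right
    exact ⟨⟨y', hq⟩, hz, ⟨1, one_pos, y', hq, (one_smul _ _).symm⟩⟩

theorem hat_polar_restricted_eq_of_convex_dom
    {X : Type*} [NormedAddCommGroup X] [NormedSpace ℝ X]
    (T : Set (X × StrongDual ℝ X)) (hT : Pseudomonotone T) (hconv : Convex ℝ (opDom T)) :
    restrictOp (pPolar (hatOp T)) (opDom T) = restrictOp (pPolar T) (opDom T) := by
  ext p
  constructor
  · rintro ⟨hp, hd⟩
    exact ⟨fun q hq => hp q (subset_hatOp T hT hq), hd⟩
  · rintro ⟨hp, hd⟩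
    refine ⟨?_, hd⟩
    rintro ⟨y, w⟩ hq
    rcases hq with ⟨hyz, hw⟩ | ⟨hyd, hyz, t, ht, y', hy', hwt⟩
    · -- y ∈ Z_T, w ∈ N_{L(T,y)}(y)
      have hy0 : PseudoRel p (y, (0 : StrongDual ℝ X)) := hp (y, 0) hyz
      have hple : p.2 (y - p.1) ≤ 0 := by
        rcases hy0 with h | ⟨h1, h2⟩
        · rcases min_lt_iff.1 h with h | h
          · simp at h
          · exact le_of_lt h
        · exact le_of_eq h2
      rcases lt_or_eq_of_le hple with h | h
      · exact Or.inl (min_lt_iff.2 (Or.inr h))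
      · -- p.2 (y - p.1) = 0 ; show w (p.1 - y) ≤ 0 via midpoint
        have hyO : y ∈ opDom T := ⟨0, hyz⟩
        set z : X := (1/2 : ℝ) • y + (1/2 : ℝ) • p.1 with hzdef
        have hzdom : z ∈ opDom T :=
          hconv hyO hd (by norm_num) (by norm_num) (by norm_num)
        obtain ⟨z', hz'⟩ := hzdom
        have e1 : p.1 - z = (1/2 : ℝ) • (p.1 - y) := by
          rw [hzdef]; module
        have e2 : z - p.1 = (1/2 : ℝ) • (y - p.1) := by
          rw [hzdef]; module
        have e3 : y - z = (1/2 : ℝ) • (y - p.1) := by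
          rw [hzdef]; module
        have e4 : z - y = (1/2 : ℝ) • (p.1 - y) := by
          rw [hzdef]; module
        have hzneg : z' (p.1 - y) ≤ 0 := by
          by_contra hpos
          push_neg at hpos
          have hrel := hp (z, z') hz'
          rcases hrel with hr | ⟨hr1, hr2⟩
          · rcases min_lt_iff.1 hr with hr | hr
            · rw [e1, map_smul] at hr
              have : (0:ℝ) < (1/2 : ℝ) • z' (p.1 - y) := by
                simp only [smul_eq_mul]; linarith
              exact absurd hr (not_lt.2 (le_of_lt this))
            · rw [e2, map_smul] at hr
              simp only [smul_eq_mul] at hr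
              rw [← h] at hr
              linarith
          · rw [e1, map_smul] at hr1
            simp only [smul_eq_mul] at hr1
            linarith
        have hzL : z ∈ Lset T y := by
          refine ⟨z', hz', ?_⟩
          rw [e3, map_smul]
          simp only [smul_eq_mul]
          have : z' (y - p.1) = - z' (p.1 - y) := by
            rw [← map_neg]; congr 1; abel
          rw [this]; linarith
        have hwle : w (p.1 - y) ≤ 0 := by
          have := hw z hzL
          rw [e4, map_smul] at this
          simp only [smul_eq_mul] at this
          linarith
        rcases lt_or_eq_of_le hwle with hlt | heq
        · exact Or.inl (min_lt_iff.2 (Or.inl hlt))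
        · exact Or.inr ⟨heq, h⟩
    · -- cone case: w = t • y'
      have hrel := hp (y, y') hy'
      subst hwt
      rcases hrel with hr | ⟨hr1, hr2⟩
      · rcases min_lt_iff.1 hr with hr | hr
        · refine Or.inl (min_lt_iff.2 (Or.inl ?_))
          simp only [ContinuousLinearMap.smul_apply, smul_eq_mul]
          exact mul_neg_of_pos_of_neg ht hr
        · exact Or.inl (min_lt_iff.2 (Or.inr hr))
      · refine Or.inr ⟨?_, hr2⟩
        simp only [ContinuousLinearMap.smul_apply, smul_eq_mul, hr1, mul_zero]
end

section
/- Let T : X ⇉ X* be a multivalued operator. Then, for every K ⊂ X, S(T^ρ, K) ⊂ M(T, K) and S(T, K) ⊂ M(T^ρ, K). -/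
open NormedSpace

theorem svi_mvi_polar_inclusions
    {X : Type*} [NormedAddCommGroup X] [NormedSpace ℝ X]
    (T : Set (X × StrongDual ℝ X)) (K : Set X) :
    SVIsol (pPolar T) K ⊆ MVIsol T K ∧ SVIsol T K ⊆ MVIsol (pPolar T) K := by
  constructor
  · rintro x ⟨hxK, x', hx', hS⟩
    refine ⟨hxK, fun q hq hqK => ?_⟩
    rcases hx' q hq with h | ⟨h1, _⟩
    · rcases min_lt_iff.mp h with h | h
      · exact le_of_lt h
      · exact absurd (hS q.1 hqK) (not_le.mpr h)
    · exact le_of_eq h1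
  · rintro x ⟨hxK, x', hx', hS⟩
    refine ⟨hxK, fun q hq hqK => ?_⟩
    rcases hq (x, x') hx' with h | ⟨_, h2⟩
    · rcases min_lt_iff.mp h with h | h
      · exact absurd (hS q.1 hqK) (not_le.mpr h)
      · exact le_of_lt h
    · exact le_of_eq h2
end

section
/- Let T : X ⇉ X* be a multivalued operator. The following are equivalent: (1) T is pseudomonotone; (2) S(T,K) ⊂ S(T^ρ,K) for all K ⊂ X; (3) M(T^ρ,K) ⊂ M(T,K) for all K ⊂ X. -/
open NormedSpace

theorem pseudomonotone_iff_vi_inclusions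
    {X : Type*} [NormedAddCommGroup X] [NormedSpace ℝ X]
    (T : Set (X × StrongDual ℝ X)) :
    [Pseudomonotone T,
     ∀ K : Set X, SVIsol T K ⊆ SVIsol (pPolar T) K,
     ∀ K : Set X, MVIsol (pPolar T) K ⊆ MVIsol T K].TFAE := by
  tfae_have 1 → 2 := by
    intro h K x hx
    obtain ⟨hxK, x', hx', hsol⟩ := hx
    exact ⟨hxK, x', fun q hq => h (x, x') hx' q hq, hsol⟩
  tfae_have 1 → 3 := by
    intro h K x hx
    obtain ⟨hxK, hm⟩ := hx
    exact ⟨hxK, fun q hq hqK => hm q (fun r hr => h q hq r hr) hqK⟩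
  tfae_have 2 → 1 := by
    intro h p hp q hq
    by_contra hnot
    simp only [PseudoRel, not_or, not_lt, le_min_iff, not_and_or] at hnot
    obtain ⟨⟨ha, hb⟩, hne⟩ := hnot
    have key : ∀ r s : X × StrongDual ℝ X, r ∈ T → s ∈ T →
        0 ≤ s.2 (r.1 - s.1) → 0 ≤ r.2 (s.1 - r.1) → r.2 (s.1 - r.1) = 0 := by
      intro r s hr hs ha' hb'
      have hssol : s.1 ∈ SVIsol T (insert r.1 {s.1}) := by
        refine ⟨by simp, s.2, hs, ?_⟩
        intro y hy
        simp only [Set.mem_insert_iff, Set.mem_singleton_iff] at hy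
        rcases hy with rfl | rfl
        · exact ha'
        · simp
      obtain ⟨-, y', hy', hsol⟩ := h _ hssol
      have h2 : 0 ≤ y' (r.1 - s.1) := hsol r.1 (by simp)
      rcases hy' r hr with h1 | h1
      · exact absurd h1 (not_lt.2 (le_min hb' h2))
      · exact h1.1
    have hb0 := key p q hp hq ha hb
    have ha0 := key q p hq hp hb ha
    rcases hne with hne | hne
    · exact hne ha0
    · exact hne hb0
  tfae_have 3 → 1 := by
    intro h p hp q hq
    by_contra hnot
    simp only [PseudoRel, not_or, not_lt, le_min_iff, not_and_or] at hnot
    obtain ⟨⟨ha, hb⟩, hne⟩ := hnot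
    have key : ∀ r s : X × StrongDual ℝ X, r ∈ T → s ∈ T →
        0 ≤ r.2 (s.1 - r.1) → s.2 (r.1 - s.1) ≤ 0 := by
      intro r s hr hs hb'
      have hrsol : r.1 ∈ MVIsol (pPolar T) (insert r.1 {s.1}) := by
        refine ⟨by simp, ?_⟩
        intro u hu huK
        simp only [Set.mem_insert_iff, Set.mem_singleton_iff] at huK
        rcases huK with h1 | h1
        · rw [h1]; simp
        · rcases hu r hr with h2 | h2
          · rw [min_lt_iff] at h2
            rcases h2 with h2 | h2
            · rw [h1] at h2; exact absurd h2 (not_lt.2 hb')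
            · exact le_of_lt h2
          · exact le_of_eq h2.2
      obtain ⟨-, hm⟩ := h _ hrsol
      exact hm s hs (by simp)
    have ha0 : q.2 (p.1 - q.1) = 0 := le_antisymm (key p q hp hq hb) ha
    have hb0 : p.2 (q.1 - p.1) = 0 := le_antisymm (key q p hq hp ha) hb
    rcases hne with hne | hne
    · exact hne ha0
    · exact hne hb0
  tfae_finish
end
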